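/- The event-study coefficient β̂_t is unbiased for τ_t if and only if the parallel trends condition holds: Cov₁(π_i, Y_{it}(0) − Y_{i0}(0)) = 0, which is equivalent to E[(1/N₁)Σ_i D_i(Y_{it}(0)−Y_{i0}(0))] = E[(1/N₀)Σ_i (1−D_i)(Y_{it}(0)−Y_{i0}(0))]. -/

import Mathlib

open MeasureTheory Finset

/-- The event-study coefficient is unbiased for τ_t iff parallel trends
(zero covariance between π and untreated trends) holds, which is in turn equivalent to
equality of the expected trends among treated and control units. -/
theorem did_unbiased_iff_parallel_trends {Ω : Type*} [MeasurableSpace Ω] (μ : Measure Ω)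
    [IsProbabilityMeasure μ]
    (N N1 N0 : ℕ) (hN1 : 0 < N1) (hN0 : 0 < N0) (hN : N1 + N0 = N)
    (Y0t Y1t Y00 Y10 π : Fin N → ℝ) (D : Fin N → Ω → ℝ)
    (hD01 : ∀ i ω, D i ω = 0 ∨ D i ω = 1)
    (hint : ∀ i, Integrable (D i) μ)
    (hE : ∀ i, ∫ ω, D i ω ∂μ = π i)
    (hsum : ∀ᵐ ω ∂μ, ∑ i, D i ω = (N1 : ℝ))
    (hnoanticip : ∀ i, Y10 i = Y00 i) :
    ((∫ ω, (((1 / (N1 : ℝ)) * ∑ i, D i ω * (D i ω * Y1t i + (1 - D i ω) * Y0t i)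
          - (1 / (N0 : ℝ)) * ∑ i, (1 - D i ω) * (D i ω * Y1t i + (1 - D i ω) * Y0t i))
        - ((1 / (N1 : ℝ)) * ∑ i, D i ω * (D i ω * Y10 i + (1 - D i ω) * Y00 i)
          - (1 / (N0 : ℝ)) * ∑ i, (1 - D i ω) * (D i ω * Y10 i + (1 - D i ω) * Y00 i))) ∂μ)
        = (1 / (N1 : ℝ)) * ∑ i, π i * (Y1t i - Y0t i)
      ↔ (1 / (N : ℝ)) * ∑ i, (π i - (N1 : ℝ) / (N : ℝ))
          * ((Y0t i - Y00 i) - (1 / (N : ℝ)) * ∑ j, (Y0t j - Y00 j)) = 0)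
    ∧ ((1 / (N : ℝ)) * ∑ i, (π i - (N1 : ℝ) / (N : ℝ))
          * ((Y0t i - Y00 i) - (1 / (N : ℝ)) * ∑ j, (Y0t j - Y00 j)) = 0
      ↔ (∫ ω, (1 / (N1 : ℝ)) * ∑ i, D i ω * (Y0t i - Y00 i) ∂μ)
          = (∫ ω, (1 / (N0 : ℝ)) * ∑ i, (1 - D i ω) * (Y0t i - Y00 i) ∂μ)) := by
  have hN1' : (N1:ℝ) ≠ 0 := Nat.cast_ne_zero.mpr hN1.ne'
  have hN0' : (N0:ℝ) ≠ 0 := Nat.cast_ne_zero.mpr hN0.ne'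
  have hNcast : (N:ℝ) = (N1:ℝ) + (N0:ℝ) := by exact_mod_cast hN.symm
  have hNN : (N1:ℝ) + (N0:ℝ) ≠ 0 := by positivity
  have hN' : (N:ℝ) ≠ 0 := by rw [hNcast]; exact hNN
  -- Σ π = N1
  have hSpi : ∑ i, π i = (N1:ℝ) := by
    have h1 : ∫ ω, (∑ i, D i ω) ∂μ = ∑ i, π i := by
      rw [integral_finset_sum _ fun i _ => hint i]
      exact Finset.sum_congr rfl fun i _ => hE i
    have h2 : ∫ ω, (∑ i, D i ω) ∂μ = (N1:ℝ) := by
      rw [integral_congr_ae hsum, integral_const]; simp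
    rw [← h1, h2]
  -- generic integral computation
  have hI : ∀ (f g : Fin N → ℝ),
      ∫ ω, (∑ i, (D i ω * f i + g i)) ∂μ = ∑ i, (π i * f i + g i) := by
    intro f g
    rw [integral_finset_sum (μ := μ) Finset.univ
        (f := fun i ω => D i ω * f i + g i)
        (fun i _ => ((hint i).mul_const _).add (integrable_const _))]
    refine Finset.sum_congr rfl fun i _ => ?_
    rw [integral_add ((hint i).mul_const _) (integrable_const _), integral_const,
        integral_mul_const, hE]
    simp
  -- the big integral
  have hbig : (∫ ω, (((1 / (N1 : ℝ)) * ∑ i, D i ω * (D i ω * Y1t i + (1 - D i ω) * Y0t i)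
          - (1 / (N0 : ℝ)) * ∑ i, (1 - D i ω) * (D i ω * Y1t i + (1 - D i ω) * Y0t i))
        - ((1 / (N1 : ℝ)) * ∑ i, D i ω * (D i ω * Y10 i + (1 - D i ω) * Y00 i)
          - (1 / (N0 : ℝ)) * ∑ i, (1 - D i ω) * (D i ω * Y10 i + (1 - D i ω) * Y00 i))) ∂μ)
      = ∑ i, (π i * ((Y1t i - Y00 i)/(N1:ℝ) + (Y0t i - Y00 i)/(N0:ℝ))
          + (Y00 i - Y0t i)/(N0:ℝ)) := by
    rw [← hI]
    apply integral_congr_ae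
    filter_upwards with ω
    simp only [hnoanticip, Finset.mul_sum, ← Finset.sum_sub_distrib]
    refine Finset.sum_congr rfl fun i _ => ?_
    rcases hD01 i ω with h | h <;> rw [h] <;> ring
  -- the treated-trend integral
  have hIT : (∫ ω, (1 / (N1 : ℝ)) * ∑ i, D i ω * (Y0t i - Y00 i) ∂μ)
      = ∑ i, (π i * ((Y0t i - Y00 i)/(N1:ℝ)) + 0) := by
    rw [← hI]
    apply integral_congr_ae
    filter_upwards with ω
    simp only [Finset.mul_sum]
    exact Finset.sum_congr rfl fun i _ => by ring
  -- the control-trend integral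
  have hIC : (∫ ω, (1 / (N0 : ℝ)) * ∑ i, (1 - D i ω) * (Y0t i - Y00 i) ∂μ)
      = ∑ i, (π i * (-(Y0t i - Y00 i)/(N0:ℝ)) + (Y0t i - Y00 i)/(N0:ℝ)) := by
    rw [← hI]
    apply integral_congr_ae
    filter_upwards with ω
    simp only [Finset.mul_sum]
    exact Finset.sum_congr rfl fun i _ => by ring
  -- covariance simplification
  have hc0 : ∑ i : Fin N, (π i - (N1:ℝ)/(N:ℝ)) = 0 := by
    rw [Finset.sum_sub_distrib, hSpi, Finset.sum_const, Finset.card_univ, Fintype.card_fin,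
        nsmul_eq_mul]
    field_simp
    ring
  have hcov : (1 / (N : ℝ)) * ∑ i, (π i - (N1 : ℝ) / (N : ℝ))
          * ((Y0t i - Y00 i) - (1 / (N : ℝ)) * ∑ j, (Y0t j - Y00 j))
      = (1/(N:ℝ)) * ∑ i, (π i - (N1:ℝ)/(N:ℝ)) * (Y0t i - Y00 i) := by
    congr 1
    simp only [mul_sub, Finset.sum_sub_distrib, ← Finset.sum_mul, hc0, zero_mul, sub_zero]
  set c : ℝ := ∑ i, (π i - (N1:ℝ)/(N:ℝ)) * (Y0t i - Y00 i) with hc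
  have hk : (N:ℝ)/((N1:ℝ)*(N0:ℝ)) ≠ 0 := div_ne_zero hN' (mul_ne_zero hN1' hN0')
  have h1N : (1:ℝ)/(N:ℝ) ≠ 0 := one_div_ne_zero hN'
  rw [hbig, hIT, hIC, hcov]
  constructor
  · -- unbiasedness iff c = 0
    have hdiff : (∑ i, (π i * ((Y1t i - Y00 i)/(N1:ℝ) + (Y0t i - Y00 i)/(N0:ℝ))
            + (Y00 i - Y0t i)/(N0:ℝ)))
          - (1 / (N1 : ℝ)) * ∑ i, π i * (Y1t i - Y0t i)
        = ((N:ℝ)/((N1:ℝ)*(N0:ℝ))) * c := by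
      rw [hc, hNcast]
      simp only [Finset.mul_sum, ← Finset.sum_sub_distrib]
      refine Finset.sum_congr rfl fun i _ => ?_
      field_simp
      ring
    rw [← sub_eq_zero, hdiff, mul_eq_zero, mul_eq_zero]
    exact ⟨fun h => Or.inr (h.resolve_left hk), fun h => Or.inr (h.resolve_left h1N)⟩
  · -- c = 0 iff equality of expected trends
    have hdiff : (∑ i, (π i * ((Y0t i - Y00 i)/(N1:ℝ)) + 0))
          - (∑ i, (π i * (-(Y0t i - Y00 i)/(N0:ℝ)) + (Y0t i - Y00 i)/(N0:ℝ)))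
        = ((N:ℝ)/((N1:ℝ)*(N0:ℝ))) * c := by
      rw [hc, hNcast]
      simp only [Finset.mul_sum, ← Finset.sum_sub_distrib]
      refine Finset.sum_congr rfl fun i _ => ?_
      field_simp
      ring
    rw [Iff.comm, ← sub_eq_zero, hdiff, mul_eq_zero, mul_eq_zero]
    exact ⟨fun h => Or.inr (h.resolve_left hk), fun h => Or.inr (h.resolve_left h1N)⟩
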